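/- The subgroup Z of L²([0,1], ℝ) consisting of (equivalence classes of) integer-valued square-integrable functions is a closed subgroup that is arcwise connected; in particular it is not discrete. -/

import Mathlib

open MeasureTheory

/-- The subgroup of integer-valued functions in `L²([0,1], ℝ)`. -/
noncomputable def integerValuedL2 :
    Set (Lp ℝ 2 (volume.restrict (Set.Icc (0:ℝ) 1))) :=
  {f | ∀ᵐ x ∂(volume.restrict (Set.Icc (0:ℝ) 1)), ∃ n : ℤ, (f : ℝ → ℝ) x = (n : ℝ)}

namespace IntegerValuedL2Aux

local notation "μ01" => volume.restrict (Set.Icc (0:ℝ) 1)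

/-- Truncation path: `f` restricted to `(-∞, t]`. -/
noncomputable def pathAux (f : Lp ℝ 2 μ01) (t : ℝ) : Lp ℝ 2 μ01 :=
  MemLp.toLp _ ((Lp.memLp f).indicator (measurableSet_Iic (a := t)))

lemma pathAux_coeFn (f : Lp ℝ 2 μ01) (t : ℝ) :
    ⇑(pathAux f t) =ᵐ[μ01] (Set.Iic t).indicator ⇑f :=
  MemLp.coeFn_toLp _

lemma indicator_sub (f : ℝ → ℝ) {s t : ℝ} (h : s ≤ t) :
    (Set.Iic t).indicator f - (Set.Iic s).indicator f = (Set.Ioc s t).indicator f := by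
  funext x
  simp only [Pi.sub_apply]
  by_cases hx : x ≤ s
  · rw [Set.indicator_of_mem (Set.mem_Iic.2 hx), Set.indicator_of_mem (Set.mem_Iic.2 (hx.trans h)),
      Set.indicator_of_notMem (fun hc : x ∈ Set.Ioc s t => absurd hc.1 (not_lt.2 hx))]
    ring
  · push_neg at hx
    by_cases hx' : x ≤ t
    · rw [Set.indicator_of_mem (Set.mem_Iic.2 hx'),
        Set.indicator_of_notMem (fun hc : x ∈ Set.Iic s => absurd (Set.mem_Iic.1 hc) (not_le.2 hx)),
        Set.indicator_of_mem (Set.mem_Ioc.2 ⟨hx, hx'⟩)]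
      ring
    · push_neg at hx'
      rw [Set.indicator_of_notMem (fun hc : x ∈ Set.Iic t => absurd (Set.mem_Iic.1 hc) (not_le.2 hx')),
        Set.indicator_of_notMem (fun hc : x ∈ Set.Iic s => absurd (Set.mem_Iic.1 hc) (not_le.2 (h.trans_lt hx'))),
        Set.indicator_of_notMem (fun hc : x ∈ Set.Ioc s t => absurd hc.2 (not_le.2 hx'))]
      ring

lemma dist_pathAux_le (f : Lp ℝ 2 μ01) {s t : ℝ} (h : s ≤ t) :
    dist (pathAux f t) (pathAux f s)
      = (eLpNorm ((Set.Ioc s t).indicator ⇑f) 2 μ01).toReal := by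
  rw [Lp.dist_def]
  congr 1
  apply eLpNorm_congr_ae
  filter_upwards [pathAux_coeFn f t, pathAux_coeFn f s] with x hxt hxs
  have := congrFun (indicator_sub (⇑f) h) x
  simpa [Pi.sub_apply, hxt, hxs] using this

lemma continuous_pathAux (f : Lp ℝ 2 μ01) : Continuous (pathAux f) := by
  rw [Metric.continuous_iff]
  intro s ε hε
  obtain ⟨δ, hδpos, hδ⟩ := (Lp.memLp f).eLpNorm_indicator_le (by norm_num) (by norm_num)
      (half_pos hε)
  refine ⟨δ, hδpos, fun t hts => ?_⟩
  have key : ∀ a b : ℝ, a ≤ b → b - a < δ →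
      dist (pathAux f b) (pathAux f a) < ε := by
    intro a b hab hablt
    rw [dist_pathAux_le f hab]
    have hμ : μ01 (Set.Ioc a b) ≤ ENNReal.ofReal δ := by
      refine le_trans (Measure.restrict_le_self _) ?_
      rw [Real.volume_Ioc]
      exact ENNReal.ofReal_le_ofReal hablt.le
    have := hδ (Set.Ioc a b) measurableSet_Ioc hμ
    have h2 : (eLpNorm ((Set.Ioc a b).indicator ⇑f) 2 μ01).toReal ≤ ε / 2 :=
      ENNReal.toReal_le_of_le_ofReal (half_pos hε).le this
    linarith
  rcases le_total s t with hst | hts'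
  · have : t - s < δ := by
      have := abs_lt.1 (by simpa [Real.dist_eq] using hts)
      linarith [this.2]
    exact (dist_comm (pathAux f t) (pathAux f s) ▸ key s t hst this)
  · have : s - t < δ := by
      have := abs_lt.1 (by simpa [Real.dist_eq] using hts)
      linarith [this.1]
    rw [dist_comm]
    exact key t s hts' this

lemma pathAux_zero (f : Lp ℝ 2 μ01) : pathAux f 0 = 0 := by
  apply Lp.ext (p := 2) (μ := μ01)
  have h0 : μ01 ({(0:ℝ)} : Set ℝ) = 0 :=
    le_antisymm (le_trans (Measure.restrict_le_self _) (by simp)) zero_le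
  have hne : ∀ᵐ x ∂μ01, x ≠ (0:ℝ) := by
    rw [ae_iff]
    simp only [ne_eq, not_not]
    exact h0 ▸ congrArg μ01 (by ext y; simp [eq_comm])
  filter_upwards [pathAux_coeFn f 0, Lp.coeFn_zero ℝ 2 μ01, ae_restrict_mem measurableSet_Icc,
    hne] with x hx h0x hmem hxne
  rw [hx, h0x]
  have : x ∉ Set.Iic (0:ℝ) := by
    simp only [Set.mem_Iic, not_le]
    exact lt_of_le_of_ne hmem.1 (Ne.symm hxne)
  simp [Set.indicator_of_notMem this]

lemma pathAux_one (f : Lp ℝ 2 μ01) : pathAux f 1 = f := by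
  apply Lp.ext (p := 2) (μ := μ01)
  filter_upwards [pathAux_coeFn f 1, ae_restrict_mem measurableSet_Icc] with x hx hmem
  rw [hx, Set.indicator_of_mem (Set.mem_Iic.2 hmem.2)]

lemma pathAux_mem (f : Lp ℝ 2 μ01) (hf : f ∈ integerValuedL2) (t : ℝ) :
    pathAux f t ∈ integerValuedL2 := by
  have hf' : ∀ᵐ x ∂μ01, ∃ n : ℤ, (f : ℝ → ℝ) x = (n : ℝ) := hf
  show ∀ᵐ x ∂μ01, ∃ n : ℤ, (pathAux f t : ℝ → ℝ) x = (n : ℝ)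
  filter_upwards [pathAux_coeFn f t, hf'] with x hx ⟨n, hn⟩
  rw [hx]
  by_cases hxt : x ∈ Set.Iic t
  · exact ⟨n, by rw [Set.indicator_of_mem hxt]; exact hn⟩
  · exact ⟨0, by rw [Set.indicator_of_notMem hxt]; simp⟩

end IntegerValuedL2Aux

set_option maxHeartbeats 1000000 in
set_option synthInstance.maxHeartbeats 1000000 in
open IntegerValuedL2Aux in
/-- The subgroup `Z` of `L²([0,1], ℝ)` consisting of (equivalence classes of)
integer-valued square-integrable functions is a closed subgroup that is arcwise connected; in
particular it is not discrete. -/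
theorem integerValuedL2_closed_pathConnected_not_discrete :
    ((0 : Lp ℝ 2 (volume.restrict (Set.Icc (0:ℝ) 1))) ∈ integerValuedL2 ∧
      (∀ f g, f ∈ integerValuedL2 → g ∈ integerValuedL2 → f + g ∈ integerValuedL2) ∧
      (∀ f, f ∈ integerValuedL2 → -f ∈ integerValuedL2)) ∧
    IsClosed integerValuedL2 ∧
    IsPathConnected integerValuedL2 ∧
    ∀ ε : ℝ, 0 < ε → ∃ f ∈ integerValuedL2, f ≠ 0 ∧ ‖f‖ < ε := by
  set μ := volume.restrict (Set.Icc (0:ℝ) 1) with hμdef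
  have hzero : (0 : Lp ℝ 2 μ) ∈ integerValuedL2 := by
    show ∀ᵐ x ∂μ, ∃ n : ℤ, ((0 : Lp ℝ 2 μ) : ℝ → ℝ) x = (n : ℝ)
    filter_upwards [Lp.coeFn_zero ℝ 2 μ] with x hx
    exact ⟨0, by simpa using hx⟩
  refine ⟨⟨hzero, ?_, ?_⟩, ?_, ?_, ?_⟩
  · -- addition
    intro f g hf hg
    have hf' : ∀ᵐ x ∂μ, ∃ n : ℤ, (f : ℝ → ℝ) x = (n : ℝ) := hf
    have hg' : ∀ᵐ x ∂μ, ∃ n : ℤ, (g : ℝ → ℝ) x = (n : ℝ) := hg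
    show ∀ᵐ x ∂μ, ∃ n : ℤ, ((f + g : Lp ℝ 2 μ) : ℝ → ℝ) x = (n : ℝ)
    filter_upwards [Lp.coeFn_add f g, hf', hg'] with x hx ⟨n, hn⟩ ⟨m, hm⟩
    exact ⟨n + m, by rw [hx]; simp [hn, hm]⟩
  · -- negation
    intro f hf
    have hf' : ∀ᵐ x ∂μ, ∃ n : ℤ, (f : ℝ → ℝ) x = (n : ℝ) := hf
    show ∀ᵐ x ∂μ, ∃ n : ℤ, ((-f : Lp ℝ 2 μ) : ℝ → ℝ) x = (n : ℝ)
    filter_upwards [Lp.coeFn_neg f, hf'] with x hx ⟨n, hn⟩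
    exact ⟨-n, by rw [hx]; simp [hn]⟩
  · -- closedness
    apply IsSeqClosed.isClosed
    intro x p hx hxp
    show ∀ᵐ a ∂μ, ∃ n : ℤ, (p : ℝ → ℝ) a = (n : ℝ)
    have hx' : ∀ n, ∀ᵐ a ∂μ, ∃ k : ℤ, ((x n : Lp ℝ 2 μ) : ℝ → ℝ) a = (k : ℝ) := hx
    have h1 : Filter.Tendsto (fun n => eLpNorm (⇑(x n) - ⇑p) 2 μ) Filter.atTop (nhds 0) :=
      (Lp.tendsto_Lp_iff_tendsto_eLpNorm' x p).mp hxp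
    have h2 : TendstoInMeasure μ (fun n => ⇑(x n)) Filter.atTop ⇑p :=
      tendstoInMeasure_of_tendsto_eLpNorm (p := 2) (by norm_num)
        (fun n => Lp.aestronglyMeasurable _) (Lp.aestronglyMeasurable p) h1
    obtain ⟨ns, -, hae⟩ := h2.exists_seq_tendsto_ae
    filter_upwards [hae, ae_all_iff.2 hx'] with a ha hZ
    have hmem : ∀ i, (fun i => (x (ns i) : ℝ → ℝ) a) i ∈ Set.range ((↑) : ℤ → ℝ) := by
      intro i
      obtain ⟨n, hn⟩ := hZ (ns i)
      exact ⟨n, hn.symm⟩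
    have hclosed : IsClosed (Set.range ((↑) : ℤ → ℝ)) :=
      Int.isClosedEmbedding_coe_real.isClosed_range
    obtain ⟨n, hn⟩ := hclosed.mem_of_tendsto ha (Filter.Eventually.of_forall hmem)
    exact ⟨n, hn.symm⟩
  · -- path connectedness
    refine ⟨0, hzero, fun {f} hf => ?_⟩
    refine ⟨⟨⟨fun t => pathAux f (t : ℝ), ?_⟩, ?_, ?_⟩, fun t => pathAux_mem f hf _⟩
    · exact (continuous_pathAux f).comp continuous_subtype_val
    · exact pathAux_zero f
    · exact pathAux_one f
  · -- not discrete
    intro ε hε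
    set δ : ℝ := min (ε ^ 2 / 2) 1 with hδdef
    have hδpos : 0 < δ := lt_min (by positivity) one_pos
    have hδ1 : δ ≤ 1 := min_le_right _ _
    have hδε : δ < ε ^ 2 := by
      have h2 : (0:ℝ) < ε ^ 2 := by positivity
      exact lt_of_le_of_lt (min_le_left _ _) (by linarith)
    have hμs : μ (Set.Icc (0:ℝ) δ) ≠ ⊤ :=
      ne_top_of_le_ne_top (by simp) (Measure.restrict_le_self _)
    set f : Lp ℝ 2 μ := indicatorConstLp 2 measurableSet_Icc hμs (1 : ℝ) with hfdef
    have hμval : μ (Set.Icc (0:ℝ) δ) = ENNReal.ofReal δ := by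
      rw [hμdef, Measure.restrict_apply measurableSet_Icc]
      have : Set.Icc (0:ℝ) δ ∩ Set.Icc (0:ℝ) 1 = Set.Icc (0:ℝ) δ := by
        apply Set.inter_eq_self_of_subset_left
        exact Set.Icc_subset_Icc le_rfl hδ1
      rw [this, Real.volume_Icc, sub_zero]
    have hnorm : ‖f‖ = δ ^ ((1:ℝ)/2) := by
      rw [hfdef, norm_indicatorConstLp (by norm_num) (by norm_num)]
      simp [Measure.real, hμval, ENNReal.toReal_ofReal hδpos.le]
    refine ⟨f, ?_, ?_, ?_⟩
    · filter_upwards [indicatorConstLp_coeFn (p := 2) (hs := measurableSet_Icc) (hμs := hμs)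
        (c := (1:ℝ))] with x hx
      rw [hx]
      by_cases hmem : x ∈ Set.Icc (0:ℝ) δ
      · exact ⟨1, by rw [Set.indicator_of_mem hmem]; simp⟩
      · exact ⟨0, by rw [Set.indicator_of_notMem hmem]; simp⟩
    · rw [← norm_ne_zero_iff, hnorm]
      positivity
    · rw [hnorm, ← Real.sqrt_eq_rpow]
      rw [show ε = Real.sqrt (ε ^ 2) by rw [Real.sqrt_sq hε.le]]
      exact Real.sqrt_lt_sqrt hδpos.le hδε
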